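/- The only elements of the ring Z[1/√2, i] with absolute value 1 are the powers ω^k of the eighth root of unity ω = e^{iπ/4}. -/

import Mathlib

noncomputable section

open Complex

/-- The eighth root of unity ω = e^{iπ/4}. -/
def omg : ℂ := Complex.exp (Real.pi * Complex.I / 4)

/-- √2 as a complex number. -/
def rt2 : ℂ := (Real.sqrt 2 : ℝ)

/-- Membership in the ring Z[ω] = {a + bω + cω² + dω³ : a,b,c,d ∈ ℤ}. -/
def Zomega (z : ℂ) : Prop :=
  ∃ a b c d : ℤ, z = a + b * omg + c * omg ^ 2 + d * omg ^ 3

/-- Membership in the ring Z[1/√2, i] = {u/(√2)^n : u ∈ Z[ω], n ∈ ℕ}. -/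
def ZRoot2i (z : ℂ) : Prop :=
  ∃ u : ℂ, Zomega u ∧ ∃ n : ℕ, z = u / rt2 ^ n

/-- `b` divides `z` within the ring Z[ω]. -/
def ZDvd (b z : ℂ) : Prop := ∃ q : ℂ, Zomega q ∧ z = b * q

/-- `k` is the greatest dividing exponent of base `b` with respect to `z`:
`b^k` divides `z` in Z[ω], while `b^(k+1)` does not. -/
def IsGde (b z : ℂ) (k : ℕ) : Prop := ZDvd (b ^ k) z ∧ ¬ ZDvd (b ^ (k + 1)) z

/-- `k` is the smallest denominator exponent of base √2 with respect to `z`: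
the smallest integer `k` such that `z·(√2)^k ∈ Z[ω]`. -/
def IsSde (z : ℂ) (k : ℤ) : Prop :=
  Zomega (z * rt2 ^ k) ∧ ∀ j : ℤ, Zomega (z * rt2 ^ j) → k ≤ j

lemma rt2_sq : rt2 ^ 2 = 2 := by
  rw [rt2, ← Complex.ofReal_pow, Real.sq_sqrt (by norm_num : (2:ℝ) ≥ 0)]
  norm_num

lemma rt2_ne : rt2 ≠ 0 := by
  rw [rt2]
  simp [Real.sqrt_eq_zero']

lemma omg_eq : omg = (Real.sqrt 2 / 2 : ℝ) + (Real.sqrt 2 / 2 : ℝ) * I := by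
  rw [omg, show (Real.pi : ℂ) * I / 4 = ((Real.pi/4 : ℝ) : ℂ) * I by push_cast; ring,
    Complex.exp_mul_I]
  rw [← Complex.ofReal_cos, ← Complex.ofReal_sin, Real.cos_pi_div_four, Real.sin_pi_div_four]

lemma omg_sq : omg ^ 2 = I := by
  have h : (Real.sqrt 2 : ℂ) ^ 2 = 2 := rt2_sq
  rw [omg_eq]
  push_cast
  linear_combination ((1+I)^2/4) * h + (1/2 : ℂ) * Complex.I_sq

lemma omg_pow4 : omg ^ 4 = -1 := by
  rw [show (4:ℕ) = 2*2 from rfl, pow_mul, omg_sq, Complex.I_sq]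

lemma rt2_eq_omg : rt2 = omg - omg ^ 3 := by
  have h2 : omg ^ 2 = I := omg_sq
  rw [pow_succ, h2, omg_eq, rt2]
  push_cast
  linear_combination ((Real.sqrt 2 : ℂ)/2) * Complex.I_sq

lemma omg_re : omg.re = Real.sqrt 2 / 2 := by rw [omg_eq]; simp
lemma omg_im : omg.im = Real.sqrt 2 / 2 := by rw [omg_eq]; simp

lemma sq_mod_two (x : ℤ) : x^2 % 2 = x % 2 := by
  rcases Int.even_or_odd x with ⟨y, h⟩ | ⟨y, h⟩ <;> subst h <;>
    obtain ⟨m, hm⟩ : ∃ m, y*y = m := ⟨_, rfl⟩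
  · rw [show (y+y)^2 = m*4 by rw [← hm]; ring]; omega
  · rw [show (2*y+1)^2 = m*4 + y*4 + 1 by rw [← hm]; ring]; omega

lemma key : ∀ n : ℕ, ∀ a b c d : ℤ,
    a^2 + b^2 + c^2 + d^2 = 2^n → a*b + b*c + c*d - d*a = 0 →
    ∃ k : ℕ, (a:ℂ) + b*omg + c*omg^2 + d*omg^3 = rt2^n * omg^k := by
  intro n
  induction n with
  | zero =>
    intro a b c d h1 h2
    have ha : a^2 ≤ 1 := by nlinarith [sq_nonneg b, sq_nonneg c, sq_nonneg d]
    have hb : b^2 ≤ 1 := by nlinarith [sq_nonneg a, sq_nonneg c, sq_nonneg d]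
    have hc : c^2 ≤ 1 := by nlinarith [sq_nonneg b, sq_nonneg a, sq_nonneg d]
    have hd : d^2 ≤ 1 := by nlinarith [sq_nonneg b, sq_nonneg c, sq_nonneg a]
    obtain ⟨ha1, ha2⟩ := abs_le.mp ((sq_le_one_iff_abs_le_one (a:ℤ)).mp ha)
    obtain ⟨hb1, hb2⟩ := abs_le.mp ((sq_le_one_iff_abs_le_one (b:ℤ)).mp hb)
    obtain ⟨hc1, hc2⟩ := abs_le.mp ((sq_le_one_iff_abs_le_one (c:ℤ)).mp hc)
    obtain ⟨hd1, hd2⟩ := abs_le.mp ((sq_le_one_iff_abs_le_one (d:ℤ)).mp hd)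
    have h4 := omg_pow4
    clear h2 ha hb hc hd
    interval_cases a <;> interval_cases b <;> interval_cases c <;> interval_cases d <;>
      first
        | (apply absurd h1; decide)
        | (refine ⟨0, ?_⟩; push_cast; ring1)
        | (refine ⟨1, ?_⟩; push_cast; ring1)
        | (refine ⟨2, ?_⟩; push_cast; ring1)
        | (refine ⟨3, ?_⟩; push_cast; ring1)
        | (refine ⟨4, ?_⟩; push_cast; linear_combination -h4)
        | (refine ⟨5, ?_⟩; push_cast; linear_combination -omg*h4)
        | (refine ⟨6, ?_⟩; push_cast; linear_combination -omg^2*h4)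
        | (refine ⟨7, ?_⟩; push_cast; linear_combination -omg^3*h4)
  | succ n ih =>
    intro a b c d h1 h2
    have e2 : (a+c)*(b+d) = 2*(a*d) := by linear_combination h2
    have hsum : (a^2 + b^2 + c^2 + d^2) % 2 = 0 := by rw [h1, pow_succ]; omega
    have hst : ∃ s t : ℤ, a + c = 2*s ∧ b + d = 2*t := by
      have pa := sq_mod_two a; have pb := sq_mod_two b
      have pc := sq_mod_two c; have pd := sq_mod_two d
      obtain ⟨A, hA⟩ : ∃ A, a^2 = A := ⟨_, rfl⟩
      obtain ⟨B, hB⟩ : ∃ B, b^2 = B := ⟨_, rfl⟩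
      obtain ⟨C, hC⟩ : ∃ C, c^2 = C := ⟨_, rfl⟩
      obtain ⟨D, hD⟩ : ∃ D, d^2 = D := ⟨_, rfl⟩
      rw [hA, hB, hC, hD] at hsum
      rw [hA] at pa; rw [hB] at pb; rw [hC] at pc; rw [hD] at pd
      have hev : Even ((a+c)*(b+d)) := ⟨a*d, by rw [e2]; ring⟩
      rcases Int.even_mul.mp hev with ⟨x, hx⟩ | ⟨x, hx⟩ <;>
        exact ⟨(a+c)/2, (b+d)/2, by omega, by omega⟩
    obtain ⟨s, t, hs, ht⟩ := hst
    have hcc : c = 2*s - a := by omega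
    have hdd : d = 2*t - b := by omega
    subst hcc hdd
    have h1' : (b-t)^2 + s^2 + t^2 + (s-a)^2 = 2^n := by
      have h2' : 2*((b-t)^2 + s^2 + t^2 + (s-a)^2) = 2*2^n := by
        rw [pow_succ] at h1; linear_combination h1
      exact mul_left_cancel₀ (by norm_num) h2'
    have h2' : (b-t)*s + s*t + t*(s-a) - (s-a)*(b-t) = 0 := by
      have h3 : 2*((b-t)*s + s*t + t*(s-a) - (s-a)*(b-t)) = 2*0 := by linear_combination h2
      exact mul_left_cancel₀ (by norm_num) h3
    obtain ⟨k, hk⟩ := ih (b-t) s t (s-a) h1' h2'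
    refine ⟨k, ?_⟩
    have hu : ((a:ℂ) + b*omg + ((2*s-a : ℤ):ℂ)*omg^2 + ((2*t-b : ℤ):ℂ)*omg^3)
        = rt2 * (((b:ℂ)-t) + s*omg + t*omg^2 + ((s:ℂ)-a)*omg^3) := by
      rw [rt2_eq_omg]
      push_cast
      linear_combination ((a:ℂ) + t*omg + ((s:ℂ)-a)*omg^2) * omg_pow4
    push_cast at hk hu ⊢
    rw [pow_succ]
    linear_combination hu + rt2 * hk

/-- The only elements of Z[1/√2, i] with absolute value 1 are the powers of ω. -/
theorem stmt0 (z : ℂ) (hz : ZRoot2i z) (habs : ‖z‖ = 1) :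
    ∃ k : ℤ, z = omg ^ k := by
  obtain ⟨u, ⟨a, b, c, d, hu⟩, n, hzn⟩ := hz
  have hrne : rt2 ^ n ≠ 0 := pow_ne_zero _ rt2_ne
  have huz : u = z * rt2 ^ n := by
    rw [hzn]; field_simp
  -- normSq u = 2^n
  have hsqrt2 : Real.sqrt 2 ^ 2 = 2 := Real.sq_sqrt (by norm_num)
  have habs_rt2 : ‖rt2‖ = Real.sqrt 2 := by
    rw [rt2, Complex.norm_real, Real.norm_eq_abs, _root_.abs_of_nonneg (Real.sqrt_nonneg 2)]
  have hnsq : Complex.normSq u = 2 ^ n := by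
    have h1 : ‖u‖ = Real.sqrt 2 ^ n := by
      rw [huz, norm_mul, habs, one_mul, norm_pow, habs_rt2]
    have h2 : Complex.normSq u = ‖u‖ ^ 2 := (Complex.sq_norm u).symm
    rw [h2, h1, ← pow_mul, mul_comm n 2, pow_mul]
    rw [hsqrt2]
  -- compute re and im of u
  have h3 : omg ^ 3 = I * omg := by rw [pow_succ, omg_sq]
  have hure : u.re = a + (b - d) * (Real.sqrt 2 / 2) := by
    rw [hu, omg_sq, h3]
    simp [Complex.add_re, Complex.mul_re, Complex.mul_im, omg_re, omg_im]
    try ring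
  have huim : u.im = c + (b + d) * (Real.sqrt 2 / 2) := by
    rw [hu, omg_sq, h3]
    simp [Complex.add_im, Complex.mul_re, Complex.mul_im, omg_re, omg_im]
    try ring
  have hkey : ((a^2 + b^2 + c^2 + d^2 : ℤ) : ℝ) +
      ((a*b + b*c + c*d - d*a : ℤ) : ℝ) * Real.sqrt 2 = 2 ^ n := by
    have := hnsq
    rw [Complex.normSq_apply, hure, huim] at this
    push_cast
    linear_combination this - (((b:ℝ)^2 + (d:ℝ)^2)/2) * hsqrt2
  have hB : a*b + b*c + c*d - d*a = 0 := by
    by_contra hB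
    apply irrational_sqrt_two
    have hBne : ((a*b + b*c + c*d - d*a : ℤ) : ℝ) ≠ 0 := Int.cast_ne_zero.mpr hB
    refine ⟨((2^n - (a^2+b^2+c^2+d^2) : ℤ) : ℚ) / ((a*b + b*c + c*d - d*a : ℤ) : ℚ), ?_⟩
    push_cast at hBne hkey ⊢
    field_simp
    rw [div_eq_iff (by contrapose! hBne; linear_combination hBne)]
    linarith [hkey]
  have hA : a^2 + b^2 + c^2 + d^2 = 2^n := by
    have h : ((a^2+b^2+c^2+d^2 : ℤ):ℝ) = ((2^n : ℤ):ℝ) := by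
      rw [hB] at hkey
      push_cast at hkey ⊢
      linarith
    exact_mod_cast h
  obtain ⟨k, hk⟩ := key n a b c d hA hB
  refine ⟨(k:ℤ), ?_⟩
  rw [hzn, hu, hk, zpow_natCast, mul_comm, mul_div_assoc, div_self hrne, mul_one]
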